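/- arXiv:2206.10832 — 2 statements merged into one kernel-verified Lean document; each statement's English description precedes it below -/
import Mathlib

section
/- Let x* be a stationary point of min_{x∈C} ½‖Ax - b‖² with multiplier γ (i.e., Aᵀ(A x* - b) = (diag(γ)⊗I_2) x*, x* ∈ C), Z = Σ_i e_i e_iᵀ ⊗ v_i with v_i = [-x*_{2i}, x*_{2i-1}]ᵀ, and H = Zᵀ Aᵀ A Z - diag(γ). If H is positive definite, then x* is a strict local minimum of the constrained problem. -/
open Matrix

/-- Euclidean norm on `ℝ^{2N}`-like spaces. -/
noncomputable def vecNorm {ι : Type*} [Fintype ι] (y : ι → ℝ) : ℝ :=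
  Real.sqrt (∑ p, y p ^ 2)

/-- The tangent basis matrix `Z = Σᵢ eᵢ eᵢᵀ ⊗ vᵢ` with `vᵢ = [-x_{2i}, x_{2i-1}]ᵀ`. -/
def tangentZmat {N : ℕ} (x : Fin N × Fin 2 → ℝ) : Matrix (Fin N × Fin 2) (Fin N) ℝ :=
  fun p j => if p.1 = j then (if p.2 = 0 then -x (j, 1) else x (j, 0)) else 0

lemma posdef_quad_lb {n : ℕ} {H : Matrix (Fin n) (Fin n) ℝ} (hH : H.PosDef) :
    ∃ lam > 0, ∀ s : Fin n → ℝ, lam * (∑ i, s i ^ 2) ≤ s ⬝ᵥ (H *ᵥ s) := by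
  rcases Nat.eq_zero_or_pos n with hn | hn
  · subst hn
    exact ⟨1, one_pos, fun s => by simp [dotProduct]⟩
  haveI : Nonempty (Fin n) := ⟨⟨0, hn⟩⟩
  have hg : Continuous fun s : Fin n → ℝ => s ⬝ᵥ (H *ᵥ s) := by
    have : (fun s : Fin n → ℝ => s ⬝ᵥ (H *ᵥ s))
        = fun s : Fin n → ℝ => ∑ i, s i * ∑ j, H i j * s j := by
      funext s; simp [dotProduct, Matrix.mulVec]
    rw [this]
    refine continuous_finset_sum _ fun i _ => ?_
    exact (continuous_apply i).mul
      (continuous_finset_sum _ fun j _ => continuous_const.mul (continuous_apply j))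
  have hf : Continuous fun s : EuclideanSpace ℝ (Fin n) =>
      (WithLp.equiv 2 _ s) ⬝ᵥ (H *ᵥ (WithLp.equiv 2 _ s)) :=
    hg.comp (PiLp.continuous_ofLp 2 _)
  have hne : (Metric.sphere (0 : EuclideanSpace ℝ (Fin n)) 1).Nonempty := by
    refine ⟨EuclideanSpace.single (Classical.arbitrary (Fin n)) (1:ℝ), ?_⟩
    simp [mem_sphere_iff_norm, EuclideanSpace.norm_single]
  obtain ⟨s₀, hs₀mem, hmin⟩ := (isCompact_sphere (0 : EuclideanSpace ℝ (Fin n)) 1).exists_isMinOn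
    hne hf.continuousOn
  rw [isMinOn_iff] at hmin
  have hs₀norm : ‖s₀‖ = 1 := by simpa [mem_sphere_iff_norm] using hs₀mem
  have hs₀ne : (WithLp.equiv 2 _ s₀ : Fin n → ℝ) ≠ 0 := by
    intro h
    have : s₀ = 0 := by simpa using congrArg (WithLp.equiv 2 _).symm h
    rw [this] at hs₀norm; simp at hs₀norm
  set lam := (WithLp.equiv 2 _ s₀) ⬝ᵥ (H *ᵥ (WithLp.equiv 2 _ s₀)) with hlamdef
  have hlampos : 0 < lam := by
    have := hH.dotProduct_mulVec_pos hs₀ne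
    simpa [star_trivial, hlamdef] using this
  refine ⟨lam, hlampos, fun s => ?_⟩
  rcases eq_or_ne s 0 with rfl | hs
  · simp [dotProduct]
  set S : EuclideanSpace ℝ (Fin n) := (WithLp.equiv 2 _).symm s with hS
  have hSne : S ≠ 0 := by
    intro h; apply hs
    have := congrArg (WithLp.equiv 2 _) h
    rw [hS] at this
    simpa using this
  have hc : 0 < ‖S‖ := norm_pos_iff.mpr hSne
  set c := ‖S‖ with hcdef
  have humem : (c⁻¹ • S) ∈ Metric.sphere (0 : EuclideanSpace ℝ (Fin n)) 1 := by
    simp [mem_sphere_iff_norm, norm_smul, abs_of_pos (inv_pos.mpr hc), hcdef,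
      inv_mul_cancel₀ hc.ne', inv_mul_cancel₀ (ne_of_gt (norm_pos_iff.mpr hSne))]
  have hmin' := hmin _ humem
  have hq : (WithLp.equiv 2 _ (c⁻¹ • S)) ⬝ᵥ (H *ᵥ (WithLp.equiv 2 _ (c⁻¹ • S)))
      = c⁻¹ * (c⁻¹ * (s ⬝ᵥ (H *ᵥ s))) := by
    have hcoord : (WithLp.equiv 2 _ (c⁻¹ • S) : Fin n → ℝ) = c⁻¹ • s := rfl
    rw [hcoord, Matrix.mulVec_smul, smul_dotProduct, dotProduct_smul]
    simp [smul_smul, mul_assoc]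
  rw [hq] at hmin'
  have hc2 : c ^ 2 = ∑ i, s i ^ 2 := by
    have hnorm : c = Real.sqrt (∑ i, ‖s i‖ ^ 2) := by
      rw [hcdef, EuclideanSpace.norm_eq]
      rfl
    rw [hnorm, Real.sq_sqrt (Finset.sum_nonneg fun i _ => sq_nonneg _)]
    simp [Real.norm_eq_abs, sq_abs]
  have := mul_le_mul_of_nonneg_left hmin' (sq_nonneg c)
  have hclear : c ^ 2 * (c⁻¹ * (c⁻¹ * (s ⬝ᵥ (H *ᵥ s)))) = s ⬝ᵥ (H *ᵥ s) := by
    field_simp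
  rw [hclear] at this
  calc lam * (∑ i, s i ^ 2) = c ^ 2 * lam := by rw [hc2]; ring
    _ ≤ s ⬝ᵥ (H *ᵥ s) := this

lemma sum_split {N : ℕ} (f : Fin N × Fin 2 → ℝ) :
    ∑ p, f p = ∑ i, (f (i, 0) + f (i, 1)) := by
  rw [Fintype.sum_prod_type]
  exact Finset.sum_congr rfl fun i _ => Fin.sum_univ_two _

lemma dot_self_sq {ι : Type*} [Fintype ι] (u : ι → ℝ) : u ⬝ᵥ u = ∑ q, u q ^ 2 := by
  simp [dotProduct, sq]

lemma dot_diag {n : Type*} [Fintype n] [DecidableEq n] (γ s : n → ℝ) :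
    s ⬝ᵥ (Matrix.diagonal γ *ᵥ s) = ∑ i, γ i * s i ^ 2 := by
  simp only [dotProduct, Matrix.mulVec_diagonal]
  exact Finset.sum_congr rfl fun i _ => by ring

set_option maxHeartbeats 1000000 in
theorem second_order_sufficient {M N : ℕ}
    (A : Matrix (Fin M × Fin 2) (Fin N × Fin 2) ℝ) (b : Fin M × Fin 2 → ℝ)
    (x : Fin N × Fin 2 → ℝ) (hx : ∀ i, x (i, 0) ^ 2 + x (i, 1) ^ 2 = 1)
    (γ : Fin N → ℝ)
    (hstat : Aᵀ *ᵥ (A *ᵥ x - b) = fun p => γ p.1 * x p)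
    (hH : ((tangentZmat x)ᵀ * (Aᵀ * A) * tangentZmat x - Matrix.diagonal γ).PosDef) :
    ∃ ε > 0, ∀ y : Fin N × Fin 2 → ℝ,
      (∀ i, y (i, 0) ^ 2 + y (i, 1) ^ 2 = 1) → y ≠ x → vecNorm (y - x) < ε →
        (1 / 2) * ∑ p, (A *ᵥ x - b) p ^ 2 < (1 / 2) * ∑ p, (A *ᵥ y - b) p ^ 2 := by
  classical
  obtain ⟨lam, hlam, hQF⟩ := posdef_quad_lb hH
  set Z := tangentZmat x with hZdef
  set K := ∑ q : Fin M × Fin 2, ∑ p : Fin N × Fin 2, A q p ^ 2 with hKdef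
  have hK : 0 ≤ K := Finset.sum_nonneg fun q _ => Finset.sum_nonneg fun p _ => sq_nonneg _
  set G := ∑ i : Fin N, |γ i| with hGdef
  have hG : 0 ≤ G := Finset.sum_nonneg fun i _ => abs_nonneg _
  set B := lam + 2 * K + G + 1 with hBdef
  have hB : 0 < B := by linarith
  refine ⟨min 1 (lam / B), lt_min one_pos (div_pos hlam hB), ?_⟩
  intro y hy hne hlt
  set d : Fin N × Fin 2 → ℝ := fun p => y p - x p with hd
  have hdyx : d = y - x := rfl
  set δ := Real.sqrt (∑ p, d p ^ 2) with hδdef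
  have hlt' : δ < min 1 (lam / B) := hlt
  have hDpos : 0 < ∑ p, d p ^ 2 := by
    obtain ⟨p, hp⟩ := Function.ne_iff.mp hne
    refine Finset.sum_pos' (fun q _ => sq_nonneg _) ⟨p, Finset.mem_univ p, ?_⟩
    have : d p ≠ 0 := sub_ne_zero.mpr hp
    positivity
  have hδpos : 0 < δ := Real.sqrt_pos.mpr hDpos
  have hδ1 : δ ≤ 1 := (lt_min_iff.mp hlt').1.le
  have hδB : δ * B < lam := (lt_div_iff₀ hB).mp (lt_min_iff.mp hlt').2
  have hDδ : ∑ p, d p ^ 2 = δ ^ 2 := (Real.sq_sqrt hDpos.le).symm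
  clear_value K G B δ
  -- tangent/normal decomposition
  set sv : Fin N → ℝ := fun i => -x (i, 1) * d (i, 0) + x (i, 0) * d (i, 1) with hsv
  set rv : Fin N → ℝ := fun i => x (i, 0) * d (i, 0) + x (i, 1) * d (i, 1) with hrv
  set w : Fin N × Fin 2 → ℝ := fun p => rv p.1 * x p with hw
  have h2 : ∀ i, d (i, 0) ^ 2 + d (i, 1) ^ 2 = sv i ^ 2 + rv i ^ 2 := by
    intro i
    simp only [hsv, hrv]
    linear_combination (-(d (i, 0) ^ 2) - d (i, 1) ^ 2) * hx i
  have h3 : ∀ i, x (i, 0) * d (i, 0) + x (i, 1) * d (i, 1)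
      = -((d (i, 0) ^ 2 + d (i, 1) ^ 2) / 2) := by
    intro i
    simp only [hd]
    linear_combination (1 / 2) * hy i - (1 / 2) * hx i
  have hrveq : ∀ i, rv i = -((sv i ^ 2 + rv i ^ 2) / 2) := by
    intro i
    rw [hrv]
    show x (i, 0) * d (i, 0) + x (i, 1) * d (i, 1) = _
    rw [h3 i, h2 i]
  have hZs : ∀ i, (Z *ᵥ sv) (i, 0) = -x (i, 1) * sv i ∧ (Z *ᵥ sv) (i, 1) = x (i, 0) * sv i := by
    intro i
    constructor <;>
    · show (∑ k, Z (i, _) k * sv k) = _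
      rw [Finset.sum_eq_single i]
      · simp [hZdef, tangentZmat]
      · intro k _ hk
        simp [hZdef, tangentZmat, Ne.symm hk]
      · simp
  have hrep : ∀ p, d p = (Z *ᵥ sv) p + w p := by
    rintro ⟨i, j⟩
    fin_cases j
    · show d (i, 0) = (Z *ᵥ sv) (i, 0) + w (i, 0)
      rw [(hZs i).1]
      show d (i, 0) = _ + rv i * x (i, 0)
      simp only [hsv, hrv]
      linear_combination (-(d (i, 0))) * hx i
    · show d (i, 1) = (Z *ᵥ sv) (i, 1) + w (i, 1)
      rw [(hZs i).2]
      show d (i, 1) = _ + rv i * x (i, 1)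
      simp only [hsv, hrv]
      linear_combination (-(d (i, 1))) * hx i
  have hdfun : d = Z *ᵥ sv + w := funext fun p => hrep p
  set S2 := ∑ i, sv i ^ 2 with hS2def
  set W2 := ∑ i, rv i ^ 2 with hW2def
  have hS2nn : 0 ≤ S2 := Finset.sum_nonneg fun i _ => sq_nonneg _
  have hW2nn : 0 ≤ W2 := Finset.sum_nonneg fun i _ => sq_nonneg _
  have hqsum : ∑ i, (sv i ^ 2 + rv i ^ 2) = δ ^ 2 := by
    rw [← hDδ, sum_split (fun p => d p ^ 2)]
    exact Finset.sum_congr rfl fun i _ => (h2 i).symm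
  have hDsum : S2 + W2 = δ ^ 2 := by
    rw [hS2def, hW2def, ← Finset.sum_add_distrib, hqsum]
  have hterm : ∀ i, sv i ^ 2 + rv i ^ 2 ≤ δ ^ 2 := by
    intro i
    rw [← hqsum]
    exact Finset.single_le_sum (f := fun j => sv j ^ 2 + rv j ^ 2)
      (fun j _ => by positivity) (Finset.mem_univ i)
  have hW2le : W2 ≤ δ ^ 2 * δ ^ 2 / 4 := by
    have hper : ∀ i, rv i ^ 2 ≤ δ ^ 2 * (sv i ^ 2 + rv i ^ 2) / 4 := by
      intro i
      clear_value d sv rv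
      have hq0 : 0 ≤ sv i ^ 2 + rv i ^ 2 := by positivity
      have key : 4 * rv i ^ 2 = (sv i ^ 2 + rv i ^ 2) ^ 2 := by
        linear_combination (4 * rv i - 2 * (sv i ^ 2 + rv i ^ 2)) * hrveq i
      have h4 : (sv i ^ 2 + rv i ^ 2) ^ 2 ≤ δ ^ 2 * (sv i ^ 2 + rv i ^ 2) := by
        nlinarith [mul_nonneg hq0 (sub_nonneg.mpr (hterm i))]
      linarith [key, h4]
    calc W2 ≤ ∑ i, δ ^ 2 * (sv i ^ 2 + rv i ^ 2) / 4 :=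
          Finset.sum_le_sum fun i _ => hper i
      _ = δ ^ 2 * (∑ i, (sv i ^ 2 + rv i ^ 2)) / 4 := by
          rw [Finset.mul_sum, Finset.sum_div]
      _ = δ ^ 2 * δ ^ 2 / 4 := by rw [hqsum]
  have hS2le : S2 ≤ δ ^ 2 := by linarith
  have hS2ge : δ ^ 2 - δ ^ 2 * δ ^ 2 / 4 ≤ S2 := by linarith
  have hZs2 : ∑ p, ((Z *ᵥ sv) p) ^ 2 = S2 := by
    rw [sum_split (fun p => ((Z *ᵥ sv) p) ^ 2), hS2def]
    refine Finset.sum_congr rfl fun i _ => ?_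
    rw [(hZs i).1, (hZs i).2]
    linear_combination (sv i ^ 2) * hx i
  have hw2 : ∑ p, w p ^ 2 = W2 := by
    rw [sum_split (fun p => w p ^ 2), hW2def]
    refine Finset.sum_congr rfl fun i _ => ?_
    show (rv i * x (i, 0)) ^ 2 + (rv i * x (i, 1)) ^ 2 = rv i ^ 2
    linear_combination (rv i ^ 2) * hx i
  clear_value d sv rv w
  have hCS : ∀ z : Fin N × Fin 2 → ℝ, ∑ q, ((A *ᵥ z) q) ^ 2 ≤ K * ∑ p, z p ^ 2 := by
    intro z
    have hq : ∀ q : Fin M × Fin 2, ((A *ᵥ z) q) ^ 2 ≤ (∑ p, A q p ^ 2) * ∑ p, z p ^ 2 := by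
      intro q
      have := Finset.sum_mul_sq_le_sq_mul_sq Finset.univ (fun p => A q p) z
      simpa [Matrix.mulVec, dotProduct] using this
    calc ∑ q, ((A *ᵥ z) q) ^ 2 ≤ ∑ q, (∑ p, A q p ^ 2) * ∑ p, z p ^ 2 :=
        Finset.sum_le_sum fun q _ => hq q
      _ = K * ∑ p, z p ^ 2 := by rw [hKdef, ← Finset.sum_mul]
  set uu := A *ᵥ (Z *ᵥ sv) with huu
  set vv := A *ᵥ w with hvv
  have hAd : A *ᵥ d = uu + vv := by rw [hdfun, Matrix.mulVec_add]
  set a2 := ∑ q, uu q ^ 2 with ha2def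
  set v2 := ∑ q, vv q ^ 2 with hv2def
  set cr := ∑ q, uu q * vv q with hcrdef
  have ha2nn : 0 ≤ a2 := Finset.sum_nonneg fun q _ => sq_nonneg _
  have hv2nn : 0 ≤ v2 := Finset.sum_nonneg fun q _ => sq_nonneg _
  have ha2le : a2 ≤ K * S2 := by
    have := hCS (Z *ᵥ sv)
    rw [hZs2] at this
    exact this
  have hv2le : v2 ≤ K * W2 := by
    have := hCS w
    rw [hw2] at this
    exact this
  clear_value uu vv a2 v2 cr
  have hQeq : sv ⬝ᵥ ((Zᵀ * (Aᵀ * A) * Z - Matrix.diagonal γ) *ᵥ sv)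
      = a2 - ∑ i, γ i * sv i ^ 2 := by
    rw [Matrix.sub_mulVec, dotProduct_sub]
    congr 1
    · rw [← Matrix.mulVec_mulVec, ← Matrix.mulVec_mulVec, ← Matrix.mulVec_mulVec]
      rw [Matrix.dotProduct_mulVec sv Zᵀ, Matrix.vecMul_transpose]
      rw [Matrix.dotProduct_mulVec _ Aᵀ, Matrix.vecMul_transpose]
      rw [ha2def, huu]
      exact dot_self_sq _
    · exact dot_diag γ sv
  have hQlow : lam * S2 ≤ a2 - ∑ i, γ i * sv i ^ 2 := by
    have h := hQF sv
    rw [hQeq] at h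
    rw [hS2def]
    exact h
  have hc2sum : ∑ q, ((A *ᵥ d) q) ^ 2 = a2 + 2 * cr + v2 := by
    rw [hAd, ha2def, hv2def, hcrdef, Finset.mul_sum, ← Finset.sum_add_distrib,
      ← Finset.sum_add_distrib]
    exact Finset.sum_congr rfl fun q _ => by simp [Pi.add_apply]; ring
  have hcross : -(2 * cr) ≤ δ * a2 + δ⁻¹ * v2 := by
    have hsum : 0 ≤ ∑ q, (δ * uu q + vv q) ^ 2 := Finset.sum_nonneg fun q _ => sq_nonneg _
    have hexp : ∑ q, (δ * uu q + vv q) ^ 2 = δ ^ 2 * a2 + 2 * δ * cr + v2 := by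
      rw [ha2def, hcrdef, hv2def, Finset.mul_sum, Finset.mul_sum, ← Finset.sum_add_distrib,
        ← Finset.sum_add_distrib]
      exact Finset.sum_congr rfl fun q _ => by ring
    rw [hexp] at hsum
    have h0 : 0 ≤ δ⁻¹ * (δ ^ 2 * a2 + 2 * δ * cr + v2) :=
      mul_nonneg (inv_nonneg.mpr hδpos.le) hsum
    have he : δ⁻¹ * (δ ^ 2 * a2 + 2 * δ * cr + v2) = δ * a2 + 2 * cr + δ⁻¹ * v2 := by
      field_simp [hδpos.ne']
    rw [he] at h0
    linarith
  have hSg2 : ∑ i, γ i * rv i ^ 2 ≤ G * (δ ^ 2 * δ ^ 2 / 4) := by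
    have h2' : ∀ i, γ i * rv i ^ 2 ≤ |γ i| * W2 := by
      intro i
      have hr2 : rv i ^ 2 ≤ W2 := by
        rw [hW2def]
        exact Finset.single_le_sum (f := fun j => rv j ^ 2)
          (fun j _ => sq_nonneg _) (Finset.mem_univ i)
      have h1 : γ i * rv i ^ 2 ≤ |γ i| * rv i ^ 2 :=
        mul_le_mul_of_nonneg_right (le_abs_self (γ i)) (sq_nonneg _)
      exact h1.trans (mul_le_mul_of_nonneg_left hr2 (abs_nonneg _))
    calc ∑ i, γ i * rv i ^ 2 ≤ ∑ i, |γ i| * W2 := Finset.sum_le_sum fun i _ => h2' i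
      _ = G * W2 := by rw [hGdef, ← Finset.sum_mul]
      _ ≤ G * (δ ^ 2 * δ ^ 2 / 4) := mul_le_mul_of_nonneg_left hW2le hG
  have hp1 : δ * a2 ≤ K * (δ ^ 2 * δ) := by
    calc δ * a2 ≤ δ * (K * S2) := mul_le_mul_of_nonneg_left ha2le hδpos.le
      _ ≤ δ * (K * δ ^ 2) :=
          mul_le_mul_of_nonneg_left (mul_le_mul_of_nonneg_left hS2le hK) hδpos.le
      _ = K * (δ ^ 2 * δ) := by ring
  have hp2 : δ⁻¹ * v2 ≤ K * (δ ^ 2 * δ) / 4 := by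
    have h1 : v2 ≤ K * (δ ^ 2 * δ ^ 2 / 4) := hv2le.trans (mul_le_mul_of_nonneg_left hW2le hK)
    calc δ⁻¹ * v2 ≤ δ⁻¹ * (K * (δ ^ 2 * δ ^ 2 / 4)) :=
        mul_le_mul_of_nonneg_left h1 (by positivity)
      _ = K * (δ ^ 2 * δ) / 4 := by field_simp [hδpos.ne']
  have hp3 : lam * (δ ^ 2 - δ ^ 2 * δ ^ 2 / 4) ≤ lam * S2 :=
    mul_le_mul_of_nonneg_left hS2ge hlam.le
  have hfin : 0 < lam * (δ ^ 2 - δ ^ 2 * δ ^ 2 / 4) - K * (δ ^ 2 * δ) - K * (δ ^ 2 * δ) / 4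
      - G * (δ ^ 2 * δ ^ 2 / 4) := by
    have hmul : δ ^ 2 * (δ * B) < δ ^ 2 * lam :=
      mul_lt_mul_of_pos_left hδB (by positivity)
    have hcube : (0:ℝ) < δ ^ 2 * δ := by positivity
    rw [hBdef] at hmul
    have f2 : δ ^ 2 * δ ^ 2 ≤ δ ^ 2 * δ := by
      have := mul_le_mul_of_nonneg_left hδ1 hcube.le
      linarith
    have f3 : lam * (δ ^ 2 * δ ^ 2) ≤ lam * (δ ^ 2 * δ) := mul_le_mul_of_nonneg_left f2 hlam.le
    have f4 : G * (δ ^ 2 * δ ^ 2) ≤ G * (δ ^ 2 * δ) := mul_le_mul_of_nonneg_left f2 hG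
    have f5 : 0 ≤ K * (δ ^ 2 * δ) := mul_nonneg hK hcube.le
    have f6 : 0 ≤ G * (δ ^ 2 * δ) := mul_nonneg hG hcube.le
    have f7 : 0 ≤ lam * (δ ^ 2 * δ) := mul_nonneg hlam.le hcube.le
    linarith only [hmul, hcube, f3, f4, f5, f6, f7]
  -- stationarity and expansion of the objective
  have hmv : A *ᵥ d = A *ᵥ y - A *ᵥ x := by
    rw [hdyx, Matrix.mulVec_sub]
  have hAy : ∀ q, (A *ᵥ y - b) q = (A *ᵥ x - b) q + (A *ᵥ d) q := by
    intro q
    rw [hmv]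
    simp only [Pi.sub_apply]
    ring
  have hAt : ∀ p, (Aᵀ *ᵥ (A *ᵥ x - b)) p = γ p.1 * x p := fun p => congrFun hstat p
  have hcrossmid : ∑ q, (A *ᵥ x - b) q * (A *ᵥ d) q = ∑ p, γ p.1 * x p * d p := by
    calc ∑ q, (A *ᵥ x - b) q * (A *ᵥ d) q
        = ∑ q, ∑ p, (A *ᵥ x - b) q * (A q p * d p) := by
          refine Finset.sum_congr rfl fun q _ => ?_
          rw [show (A *ᵥ d) q = ∑ p, A q p * d p from rfl, Finset.mul_sum]
      _ = ∑ p, ∑ q, (A *ᵥ x - b) q * (A q p * d p) := Finset.sum_comm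
      _ = ∑ p, (∑ q, Aᵀ p q * (A *ᵥ x - b) q) * d p := by
          refine Finset.sum_congr rfl fun p _ => ?_
          rw [Finset.sum_mul]
          exact Finset.sum_congr rfl fun q _ => by rw [Matrix.transpose_apply]; ring
      _ = ∑ p, γ p.1 * x p * d p := by
          refine Finset.sum_congr rfl fun p _ => ?_
          rw [show (∑ q, Aᵀ p q * (A *ᵥ x - b) q) = (Aᵀ *ᵥ (A *ᵥ x - b)) p from rfl, hAt p]
  have hEc : 2 * ∑ p, γ p.1 * x p * d p = -∑ i, γ i * (sv i ^ 2 + rv i ^ 2) := by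
    rw [Finset.mul_sum, sum_split (fun p => 2 * (γ p.1 * x p * d p)), ← Finset.sum_neg_distrib]
    refine Finset.sum_congr rfl fun i _ => ?_
    show 2 * (γ i * x (i, 0) * d (i, 0)) + 2 * (γ i * x (i, 1) * d (i, 1))
      = -(γ i * (sv i ^ 2 + rv i ^ 2))
    linear_combination (2 * γ i) * h3 i + (-(γ i)) * h2 i
  have hsplitγ : ∑ i, γ i * (sv i ^ 2 + rv i ^ 2)
      = (∑ i, γ i * sv i ^ 2) + ∑ i, γ i * rv i ^ 2 := by
    rw [← Finset.sum_add_distrib]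
    exact Finset.sum_congr rfl fun i _ => by ring
  have hfinal : ∑ q, (A *ᵥ y - b) q ^ 2
      = ∑ q, (A *ᵥ x - b) q ^ 2
        + (∑ q, ((A *ᵥ d) q) ^ 2 - ∑ i, γ i * (sv i ^ 2 + rv i ^ 2)) := by
    have hexp : ∑ q, (A *ᵥ y - b) q ^ 2
        = ∑ q, (A *ᵥ x - b) q ^ 2
          + (2 * ∑ q, (A *ᵥ x - b) q * (A *ᵥ d) q + ∑ q, ((A *ᵥ d) q) ^ 2) := by
      rw [Finset.mul_sum, ← Finset.sum_add_distrib, ← Finset.sum_add_distrib]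
      refine Finset.sum_congr rfl fun q _ => ?_
      rw [hAy q]
      ring
    rw [hexp, hcrossmid, hEc]
    ring
  have hT : 0 < ∑ q, ((A *ᵥ d) q) ^ 2 - ∑ i, γ i * (sv i ^ 2 + rv i ^ 2) := by
    rw [hc2sum, hsplitγ]
    linarith only [hcross, hp1, hp2, hp3, hSg2, hv2nn, hQlow, hfin]
  linarith only [hfinal, hT]
end

section
/- Let x* ∈ C be a local minimum of min_{x∈C} ½‖Ax - b‖² with Lagrange multiplier γ. Then the reduced Hessian H = Zᵀ Aᵀ A Z - diag(γ) is positive semidefinite, where Z is the tangent-space basis at x*. -/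
open Matrix Filter Topology

/-- slope limit for `sin (t*a)/t`. -/
lemma tendsto_sin_slope (a : ℝ) :
    Tendsto (fun t : ℝ => Real.sin (t * a) / t) (𝓝[≠] 0) (𝓝 a) := by
  have h1 : HasDerivAt (fun t : ℝ => Real.sin (t * a)) a 0 := by
    have := (Real.hasDerivAt_sin (0 * a)).comp 0 ((hasDerivAt_id (0 : ℝ)).mul_const a)
    simpa [Function.comp_def] using this
  have := hasDerivAt_iff_tendsto_slope.mp h1
  refine this.congr fun t => ?_
  simp [slope_def_field]

/-- slope limit for `(cos (t*a) - 1)/t`. -/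
lemma tendsto_cos_slope (a : ℝ) :
    Tendsto (fun t : ℝ => (Real.cos (t * a) - 1) / t) (𝓝[≠] 0) (𝓝 0) := by
  have h1 : HasDerivAt (fun t : ℝ => Real.cos (t * a)) 0 0 := by
    have := (Real.hasDerivAt_cos (0 * a)).comp 0 ((hasDerivAt_id (0 : ℝ)).mul_const a)
    simpa [Function.comp_def] using this
  have := hasDerivAt_iff_tendsto_slope.mp h1
  refine this.congr fun t => ?_
  simp [slope_def_field]

lemma cos_sub_one (s : ℝ) : Real.cos s - 1 = -2 * Real.sin (s / 2) ^ 2 := by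
  have h1 := Real.cos_two_mul' (s / 2)
  have h2 := Real.sin_sq_add_cos_sq (s / 2)
  have h3 : 2 * (s / 2) = s := by ring
  rw [h3] at h1
  linarith

theorem second_order_necessary {M N : ℕ}
    (A : Matrix (Fin M × Fin 2) (Fin N × Fin 2) ℝ) (b : Fin M × Fin 2 → ℝ)
    (x : Fin N × Fin 2 → ℝ) (hx : ∀ i, x (i, 0) ^ 2 + x (i, 1) ^ 2 = 1)
    (γ : Fin N → ℝ)
    (hstat : Aᵀ *ᵥ (A *ᵥ x - b) = fun p => γ p.1 * x p)
    (hmin : ∃ ε > 0, ∀ y : Fin N × Fin 2 → ℝ,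
      (∀ i, y (i, 0) ^ 2 + y (i, 1) ^ 2 = 1) → vecNorm (y - x) < ε →
        (1 / 2) * ∑ p, (A *ᵥ x - b) p ^ 2 ≤ (1 / 2) * ∑ p, (A *ᵥ y - b) p ^ 2) :
    ((tangentZmat x)ᵀ * (Aᵀ * A) * tangentZmat x - Matrix.diagonal γ).PosSemidef := by
  classical
  rw [Matrix.posSemidef_iff_dotProduct_mulVec]
  constructor
  · -- Hermitian
    show _ᴴ = _
    have : ∀ (B : Matrix (Fin N) (Fin N) ℝ), Bᴴ = Bᵀ := fun B => rfl
    rw [this]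
    simp [Matrix.transpose_sub, Matrix.transpose_mul, Matrix.transpose_transpose,
      Matrix.diagonal_transpose, Matrix.mul_assoc]
  intro z
  -- tangent direction
  set v : Fin N × Fin 2 → ℝ := fun p => if p.2 = 0 then -x (p.1, 1) else x (p.1, 0) with hv
  set w : Fin N × Fin 2 → ℝ := fun p => z p.1 * v p with hwdef
  have hZw : tangentZmat x *ᵥ z = w := by
    funext p
    simp only [Matrix.mulVec, dotProduct, tangentZmat, hwdef, hv]
    rw [Finset.sum_eq_single p.1]
    · simp [mul_comm]
    · intro j _ hj; simp [Ne.symm hj]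
    · simp
  -- the curve
  set y : ℝ → (Fin N × Fin 2) → ℝ :=
    fun t p => Real.cos (t * z p.1) * x p + Real.sin (t * z p.1) * v p with hy
  have hcirc : ∀ t i, y t (i, 0) ^ 2 + y t (i, 1) ^ 2 = 1 := by
    intro t i
    have h1 := hx i
    have h2 := Real.sin_sq_add_cos_sq (t * z i)
    simp only [hy, hv]
    norm_num
    nlinarith [h1, h2]
  have hy0 : ∀ p, y 0 p = x p := by intro p; simp [hy]
  -- inner product identity
  have hinner : ∀ t, (fun p => γ p.1 * x p) ⬝ᵥ (fun p => y t p - x p)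
      = ∑ i, γ i * (Real.cos (t * z i) - 1) := by
    intro t
    simp only [dotProduct]
    rw [Fintype.sum_prod_type]
    refine Finset.sum_congr rfl fun i _ => ?_
    rw [Fin.sum_univ_two]
    have h1 := hx i
    simp only [hy, hv]
    norm_num
    linear_combination (γ i * (Real.cos (t * z i) - 1)) * h1
  -- expansion of the objective
  have hF : ∀ t, (1 / 2 : ℝ) * ∑ p, (A *ᵥ y t - b) p ^ 2
      = (1 / 2) * ∑ p, (A *ᵥ x - b) p ^ 2 + (∑ i, γ i * (Real.cos (t * z i) - 1))
        + (1 / 2) * ∑ p, (A *ᵥ (fun q => y t q - x q)) p ^ 2 := by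
    intro t
    have hsplit : A *ᵥ y t - b = (A *ᵥ x - b) + A *ᵥ (fun q => y t q - x q) := by
      have : (fun q => y t q - x q) = y t - x := rfl
      rw [this, Matrix.mulVec_sub]
      abel
    rw [hsplit]
    have hexp : ∑ p, ((A *ᵥ x - b) p + (A *ᵥ (fun q => y t q - x q)) p) ^ 2
        = ∑ p, (A *ᵥ x - b) p ^ 2
          + 2 * ((A *ᵥ x - b) ⬝ᵥ (A *ᵥ (fun q => y t q - x q)))
          + ∑ p, (A *ᵥ (fun q => y t q - x q)) p ^ 2 := by
      simp only [dotProduct, Finset.mul_sum, ← Finset.sum_add_distrib]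
      refine Finset.sum_congr rfl fun p _ => ?_
      ring
    have hdp : (A *ᵥ x - b) ⬝ᵥ (A *ᵥ (fun q => y t q - x q))
        = ∑ i, γ i * (Real.cos (t * z i) - 1) := by
      rw [Matrix.dotProduct_mulVec, ← Matrix.mulVec_transpose, hstat, hinner]
    simp only [Pi.add_apply] at hexp ⊢
    rw [hexp, hdp]
    ring
  -- eventual nonnegativity data
  obtain ⟨ε, hε, hloc⟩ := hmin
  -- continuity: vecNorm (y t - x) → 0
  have hcont : Tendsto (fun t => vecNorm (y t - x)) (𝓝 0) (𝓝 0) := by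
    have hsum : Tendsto (fun t => ∑ p, (y t p - x p) ^ 2) (𝓝 0) (𝓝 0) := by
      have : Continuous fun t => ∑ p : Fin N × Fin 2, (y t p - x p) ^ 2 := by
        refine continuous_finset_sum _ fun p _ => ?_
        simp only [hy]
        fun_prop
      have h0 : (∑ p : Fin N × Fin 2, (y 0 p - x p) ^ 2) = 0 := by
        simp [hy0]
      simpa [h0] using this.tendsto 0
    have : Tendsto (fun t => Real.sqrt (∑ p, (y t p - x p) ^ 2)) (𝓝 0) (𝓝 (Real.sqrt 0)) :=
      (Real.continuous_sqrt.tendsto 0).comp hsum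
    simpa [vecNorm, Pi.sub_apply] using this
  have hsmall : ∀ᶠ t in 𝓝[≠] (0 : ℝ), vecNorm (y t - x) < ε :=
    (hcont.mono_left nhdsWithin_le_nhds).eventually (gt_mem_nhds hε)
  -- the rescaled objective difference
  set φ : ℝ → ℝ := fun t => (2 / t ^ 2) *
    ((1 / 2) * ∑ p, (A *ᵥ y t - b) p ^ 2 - (1 / 2) * ∑ p, (A *ᵥ x - b) p ^ 2) with hφ
  have hφnonneg : ∀ᶠ t in 𝓝[≠] (0 : ℝ), 0 ≤ φ t := by
    filter_upwards [hsmall, self_mem_nhdsWithin] with t ht htne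
    have h1 : (1 / 2 : ℝ) * ∑ p, (A *ᵥ x - b) p ^ 2
        ≤ (1 / 2) * ∑ p, (A *ᵥ y t - b) p ^ 2 :=
      hloc (y t) (hcirc t) ht
    have ht0 : (t : ℝ) ≠ 0 := htne
    have hsq : (0 : ℝ) < t ^ 2 := (sq_nonneg t).lt_of_ne (by simpa using (pow_ne_zero 2 ht0).symm)
    have h2 : 0 < (2 : ℝ) / t ^ 2 := div_pos two_pos hsq
    have := sub_nonneg.mpr h1
    exact mul_nonneg h2.le this
  -- rewrite φ for t ≠ 0
  have hφeq : ∀ t : ℝ, t ≠ 0 → φ t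
      = (∑ i, γ i * (-(2 * Real.sin (t * z i / 2) / t) ^ 2))
        + ∑ p, (∑ q, A p q * ((y t q - x q) / t)) ^ 2 := by
    intro t ht
    have ht2 : (t : ℝ) ^ 2 ≠ 0 := pow_ne_zero 2 ht
    have hφt : φ t = (2 / t ^ 2) *
      ((1 / 2) * ∑ p, (A *ᵥ y t - b) p ^ 2 - (1 / 2) * ∑ p, (A *ᵥ x - b) p ^ 2) := rfl
    rw [hφt, hF t]
    have hterm : ∀ i, (2 / t ^ 2) * (γ i * (Real.cos (t * z i) - 1))
        = γ i * (-(2 * Real.sin (t * z i / 2) / t) ^ 2) := by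
      intro i
      rw [cos_sub_one (t * z i)]
      field_simp
    have hquadterm : ∀ p : Fin M × Fin 2, (2 / t ^ 2) * ((1 / 2) * (A *ᵥ (fun q => y t q - x q)) p ^ 2)
        = (∑ q, A p q * ((y t q - x q) / t)) ^ 2 := by
      intro p
      have : (∑ q, A p q * ((y t q - x q) / t)) = (A *ᵥ (fun q => y t q - x q)) p / t := by
        simp only [Matrix.mulVec, dotProduct, Finset.sum_div]
        exact Finset.sum_congr rfl fun q _ => by ring
      rw [this]
      field_simp
    calc (2 / t ^ 2) * ((1 / 2) * ∑ p, (A *ᵥ x - b) p ^ 2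
            + (∑ i, γ i * (Real.cos (t * z i) - 1))
            + (1 / 2) * ∑ p, (A *ᵥ (fun q => y t q - x q)) p ^ 2
            - (1 / 2) * ∑ p, (A *ᵥ x - b) p ^ 2)
        = ∑ i, (2 / t ^ 2) * (γ i * (Real.cos (t * z i) - 1))
            + ∑ p, (2 / t ^ 2) * ((1 / 2) * (A *ᵥ (fun q => y t q - x q)) p ^ 2) := by
          simp only [← Finset.mul_sum]; ring
      _ = _ := by
          rw [Finset.sum_congr rfl fun i _ => hterm i,
            Finset.sum_congr rfl fun p _ => hquadterm p]
  -- limits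
  have hdir : ∀ q : Fin N × Fin 2,
      Tendsto (fun t => (y t q - x q) / t) (𝓝[≠] 0) (𝓝 (w q)) := by
    intro q
    have h1 : ∀ t : ℝ, (y t q - x q) / t
        = ((Real.cos (t * z q.1) - 1) / t) * x q + (Real.sin (t * z q.1) / t) * v q := by
      intro t
      simp only [hy]
      ring
    have h2 : Tendsto (fun t => ((Real.cos (t * z q.1) - 1) / t) * x q
        + (Real.sin (t * z q.1) / t) * v q) (𝓝[≠] 0) (𝓝 (0 * x q + z q.1 * v q)) :=
      ((tendsto_cos_slope (z q.1)).mul_const _).add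
        ((tendsto_sin_slope (z q.1)).mul_const _)
    rw [hwdef]
    simpa [h1] using h2
  have hlim : Tendsto φ (𝓝[≠] 0)
      (𝓝 ((∑ i, γ i * (-(z i) ^ 2)) + ∑ p, (∑ q, A p q * w q) ^ 2)) := by
    have hpart1 : Tendsto (fun t => ∑ i, γ i * (-(2 * Real.sin (t * z i / 2) / t) ^ 2))
        (𝓝[≠] 0) (𝓝 (∑ i, γ i * (-(z i) ^ 2))) := by
      refine tendsto_finset_sum _ fun i _ => ?_
      have hs : Tendsto (fun t : ℝ => 2 * Real.sin (t * z i / 2) / t) (𝓝[≠] 0) (𝓝 (z i)) := by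
        have := (tendsto_sin_slope (z i / 2)).const_mul 2
        have heq : ∀ t : ℝ, 2 * (Real.sin (t * (z i / 2)) / t) = 2 * Real.sin (t * z i / 2) / t := by
          intro t; rw [show t * (z i / 2) = t * z i / 2 by ring]; ring
        simpa [heq, show 2 * (z i / 2) = z i by ring] using this
      exact ((hs.pow 2).neg).const_mul (γ i)
    have hpart2 : Tendsto (fun t => ∑ p, (∑ q, A p q * ((y t q - x q) / t)) ^ 2)
        (𝓝[≠] 0) (𝓝 (∑ p, (∑ q, A p q * w q) ^ 2)) := by
      refine tendsto_finset_sum _ fun p _ => ?_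
      exact (tendsto_finset_sum _ fun q _ => (hdir q).const_mul (A p q)).pow 2
    have := hpart1.add hpart2
    refine Tendsto.congr' ?_ this
    filter_upwards [self_mem_nhdsWithin] with t ht
    exact (hφeq t ht).symm
  have hge : 0 ≤ (∑ i, γ i * (-(z i) ^ 2)) + ∑ p, (∑ q, A p q * w q) ^ 2 :=
    ge_of_tendsto hlim hφnonneg
  -- identify the quadratic form
  have hquad : star z ⬝ᵥ (((tangentZmat x)ᵀ * (Aᵀ * A) * tangentZmat x - Matrix.diagonal γ) *ᵥ z)
      = (∑ i, γ i * (-(z i) ^ 2)) + ∑ p, (∑ q, A p q * w q) ^ 2 := by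
    have hstarz : star z = z := by funext i; exact star_trivial _
    rw [hstarz, Matrix.sub_mulVec, dotProduct_sub]
    have h1 : z ⬝ᵥ ((tangentZmat x)ᵀ * (Aᵀ * A) * tangentZmat x) *ᵥ z
        = ∑ p, (∑ q, A p q * w q) ^ 2 := by
      rw [← Matrix.mulVec_mulVec, ← Matrix.mulVec_mulVec, hZw,
        Matrix.dotProduct_mulVec, Matrix.vecMul_transpose, hZw,
        ← Matrix.mulVec_mulVec, Matrix.dotProduct_mulVec, Matrix.vecMul_transpose]
      simp only [dotProduct, Matrix.mulVec]
      exact Finset.sum_congr rfl fun p _ => by ring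
    have h2 : z ⬝ᵥ (Matrix.diagonal γ) *ᵥ z = -∑ i, γ i * (-(z i) ^ 2) := by
      simp only [dotProduct, Matrix.mulVec_diagonal, ← Finset.sum_neg_distrib]
      refine Finset.sum_congr rfl fun i _ => ?_
      ring
    rw [h1, h2]
    ring
  rw [hquad]
  exact hge
end
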